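/- arXiv:1212.5433 — 3 statements merged into one kernel-verified Lean document; each statement's English description precedes it below -/
import Mathlib

section
/- Let W be a group, H a subgroup of index 2, σ ∈ W \ H, and ρ : H → GL(n,ℂ) an irreducible representation. Suppose α ∈ GL(n,ℂ) satisfies ρ(σ⁻¹ w σ) = α⁻¹ · (ρ(w)ᵀ)⁻¹ · α for all w ∈ H. Then there exists a sign λ ∈ {1,-1} such that ρ(σ²) = λ · (αᵀ)⁻¹ · α. -/
open Matrix

noncomputable section

/-- Transpose-inverse as a monoid hom on units of a matrix ring. -/
def tiu {m : Type*} {R : Type*} [Fintype m] [DecidableEq m] [CommRing R] :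
    (Matrix m m R)ˣ →* (Matrix m m R)ˣ where
  toFun u := ⟨((u⁻¹ : (Matrix m m R)ˣ) : Matrix m m R)ᵀ, ((u : Matrix m m R))ᵀ,
    by rw [← Matrix.transpose_mul, ← Units.val_mul, mul_inv_cancel, Units.val_one,
      Matrix.transpose_one],
    by rw [← Matrix.transpose_mul, ← Units.val_mul, inv_mul_cancel, Units.val_one,
      Matrix.transpose_one]⟩
  map_one' := by
    ext
    simp only [Units.val_one, inv_one, Matrix.transpose_one]
  map_mul' u v := by
    refine Units.ext ?_
    show ((((u * v)⁻¹ : (Matrix m m R)ˣ)) : Matrix m m R)ᵀ =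
      ((u⁻¹ : (Matrix m m R)ˣ) : Matrix m m R)ᵀ * ((v⁻¹ : (Matrix m m R)ˣ) : Matrix m m R)ᵀ
    rw [_root_.mul_inv_rev, Units.val_mul, Matrix.transpose_mul]

theorem tiu_val {m : Type*} {R : Type*} [Fintype m] [DecidableEq m] [CommRing R]
    (u : (Matrix m m R)ˣ) :
    ((tiu u : (Matrix m m R)ˣ) : Matrix m m R) = ((u⁻¹ : (Matrix m m R)ˣ) : Matrix m m R)ᵀ :=
  rfl

theorem tiu_tiu {m : Type*} {R : Type*} [Fintype m] [DecidableEq m] [CommRing R]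
    (u : (Matrix m m R)ˣ) : tiu (tiu u) = u := by
  ext
  rw [tiu_val, ← map_inv, tiu_val, inv_inv, Matrix.transpose_transpose]

/-- Given an index-2 subgroup `H ≤ W`, `σ ∈ W \ H`, an irreducible representation
`ρ : H → GL(n,ℂ)` and `α ∈ GL(n,ℂ)` intertwining `ρ ∘ (conjugation by σ)` with the
transpose-inverse dual of `ρ`, there is a sign `λ ∈ {1,-1}` with
`ρ(σ²) = λ (αᵀ)⁻¹ α`. -/
theorem stmt4 (n : ℕ) (hn : 0 < n) (W : Type*) [Group W] (H : Subgroup W)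
    (hH : H.index = 2) (σ : W) (hσ : σ ∉ H)
    (ρ : H →* (Matrix (Fin n) (Fin n) ℂ)ˣ)
    (hirr : ∀ p : Submodule ℂ (Fin n → ℂ),
      (∀ (h : H) (v : Fin n → ℂ), v ∈ p →
        ((ρ h : (Matrix (Fin n) (Fin n) ℂ)ˣ) : Matrix (Fin n) (Fin n) ℂ).mulVec v ∈ p) →
      p = ⊥ ∨ p = ⊤)
    (α : (Matrix (Fin n) (Fin n) ℂ)ˣ)
    (hα : ∀ (w : W) (hw : w ∈ H) (hw' : σ⁻¹ * w * σ ∈ H),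
      ((ρ ⟨σ⁻¹ * w * σ, hw'⟩ : (Matrix (Fin n) (Fin n) ℂ)ˣ) : Matrix (Fin n) (Fin n) ℂ) =
        ((α : Matrix (Fin n) (Fin n) ℂ))⁻¹ *
          (((ρ ⟨w, hw⟩ : (Matrix (Fin n) (Fin n) ℂ)ˣ) : Matrix (Fin n) (Fin n) ℂ)ᵀ)⁻¹ *
          (α : Matrix (Fin n) (Fin n) ℂ)) :
    ∃ lam : ℂ, (lam = 1 ∨ lam = -1) ∧
      ∀ h2 : σ * σ ∈ H,
        ((ρ ⟨σ * σ, h2⟩ : (Matrix (Fin n) (Fin n) ℂ)ˣ) : Matrix (Fin n) (Fin n) ℂ) =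
          lam • ((((α : Matrix (Fin n) (Fin n) ℂ))ᵀ)⁻¹ * (α : Matrix (Fin n) (Fin n) ℂ)) := by
  classical
  haveI : Nonempty (Fin n) := ⟨⟨0, hn⟩⟩
  have hmem : ∀ a b : W, a * b ∈ H ↔ (a ∈ H ↔ b ∈ H) := fun a b =>
    Subgroup.mul_mem_iff_of_index_two hH
  have hσσ : σ * σ ∈ H := (hmem σ σ).2 Iff.rfl
  have hσinv : σ⁻¹ ∉ H := fun h => hσ (by simpa using H.inv_mem h)
  have hconj : ∀ w : W, w ∈ H → σ⁻¹ * w * σ ∈ H := by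
    intro w hw
    have h2 : σ⁻¹ * w ∉ H := by
      rw [hmem]; intro h; exact hσinv (h.2 hw)
    exact (hmem _ _).2 ⟨fun h => absurd h h2, fun h => absurd h hσ⟩
  -- units form of hα
  have hαu : ∀ (w : W) (hw : w ∈ H) (hw' : σ⁻¹ * w * σ ∈ H),
      ρ ⟨σ⁻¹ * w * σ, hw'⟩ = α⁻¹ * tiu (ρ ⟨w, hw⟩) * α := by
    intro w hw hw'
    ext
    rw [Units.val_mul, Units.val_mul, tiu_val, hα w hw hw', Matrix.coe_units_inv,
      Matrix.coe_units_inv, Matrix.transpose_nonsing_inv]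
  set S : (Matrix (Fin n) (Fin n) ℂ)ˣ := ρ ⟨σ * σ, hσσ⟩ with hS
  set γ : (Matrix (Fin n) (Fin n) ℂ)ˣ := tiu α * α with hγ
  -- commutation
  have hcomm : ∀ w : H, ρ w * (S * γ⁻¹) = (S * γ⁻¹) * ρ w := by
    intro w
    have hw' : σ⁻¹ * (w : W) * σ ∈ H := hconj _ w.2
    have hw'' : σ⁻¹ * (σ⁻¹ * (w : W) * σ) * σ ∈ H := hconj _ hw'
    have e1 : ρ ⟨σ⁻¹ * (w : W) * σ, hw'⟩ = α⁻¹ * tiu (ρ w) * α := by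
      rw [hαu (w : W) w.2 hw']
    have e2 : ρ ⟨σ⁻¹ * (σ⁻¹ * (w : W) * σ) * σ, hw''⟩ = γ⁻¹ * ρ w * γ := by
      rw [hαu _ hw' hw'', e1, MonoidHom.map_mul, MonoidHom.map_mul, MonoidHom.map_inv, tiu_tiu,
        hγ, _root_.mul_inv_rev]
      group
    have e3 : (⟨σ⁻¹ * (σ⁻¹ * (w : W) * σ) * σ, hw''⟩ : H) =
        (⟨σ * σ, hσσ⟩ : H)⁻¹ * w * ⟨σ * σ, hσσ⟩ := by
      ext; simp; group
    rw [e3, MonoidHom.map_mul, MonoidHom.map_mul, MonoidHom.map_inv, ← hS] at e2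
    have key : ∀ a b x : (Matrix (Fin n) (Fin n) ℂ)ˣ,
        a⁻¹ * x * a = b⁻¹ * x * b → x * (a * b⁻¹) = a * b⁻¹ * x := by
      intro a b x h
      have h1 : x * a = a * (b⁻¹ * x * b) := by rw [← h]; group
      calc x * (a * b⁻¹) = (x * a) * b⁻¹ := by group
        _ = a * (b⁻¹ * x * b) * b⁻¹ := by rw [h1]
        _ = a * b⁻¹ * x := by group
    exact key S γ (ρ w) e2
  -- Schur
  set N : Matrix (Fin n) (Fin n) ℂ := ((S * γ⁻¹ : (Matrix (Fin n) (Fin n) ℂ)ˣ) :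
    Matrix (Fin n) (Fin n) ℂ) with hN
  have hNcomm : ∀ w : H,
      ((ρ w : (Matrix (Fin n) (Fin n) ℂ)ˣ) : Matrix (Fin n) (Fin n) ℂ) * N =
        N * ((ρ w : (Matrix (Fin n) (Fin n) ℂ)ˣ) : Matrix (Fin n) (Fin n) ℂ) := by
    intro w
    rw [hN, ← Units.val_mul, ← Units.val_mul, hcomm w]
  obtain ⟨c, hc⟩ := Module.End.exists_eigenvalue (Matrix.mulVecLin N)
  have hptop : Module.End.eigenspace (Matrix.mulVecLin N) c = ⊤ := by
    refine (hirr _ ?_).resolve_left hc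
    intro h v hv
    rw [Module.End.mem_eigenspace_iff] at hv ⊢
    rw [Matrix.mulVecLin_apply] at hv ⊢
    rw [Matrix.mulVec_mulVec, ← hNcomm h, ← Matrix.mulVec_mulVec, hv, Matrix.mulVec_smul]
  have hNall : ∀ v : Fin n → ℂ, N *ᵥ v = c • v := by
    intro v
    have : v ∈ Module.End.eigenspace (Matrix.mulVecLin N) c := by rw [hptop]; trivial
    simpa [Matrix.mulVecLin_apply] using Module.End.mem_eigenspace_iff.1 this
  have hNsc : N = c • (1 : Matrix (Fin n) (Fin n) ℂ) := by
    ext i j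
    have := congrFun (hNall (Pi.single j 1)) i
    rw [Matrix.mulVec_single_one] at this
    simpa [Matrix.one_apply, Pi.single_apply, eq_comm] using this
  -- S = c • γ
  have hSval : (S : Matrix (Fin n) (Fin n) ℂ) = c • (γ : Matrix (Fin n) (Fin n) ℂ) := by
    have : S = (S * γ⁻¹) * γ := by group
    calc (S : Matrix (Fin n) (Fin n) ℂ)
        = N * (γ : Matrix (Fin n) (Fin n) ℂ) := by
          conv_lhs => rw [this]
          rw [Units.val_mul, hN]
      _ = c • (γ : Matrix (Fin n) (Fin n) ℂ) := by rw [hNsc, smul_mul_assoc, one_mul]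
  set B : Matrix (Fin n) (Fin n) ℂ :=
    ((α⁻¹ : (Matrix (Fin n) (Fin n) ℂ)ˣ) : Matrix (Fin n) (Fin n) ℂ)ᵀ *
      (α : Matrix (Fin n) (Fin n) ℂ) with hB
  have hγval : (γ : Matrix (Fin n) (Fin n) ℂ) = B := by
    rw [hγ, Units.val_mul, tiu_val, hB]
  -- the self-duality relation for S
  have hw'σσ : σ⁻¹ * (σ * σ) * σ ∈ H := hconj _ hσσ
  have e4 : S = α⁻¹ * tiu S * α := by
    have := hαu (σ * σ) hσσ hw'σσ
    have heq : (⟨σ⁻¹ * (σ * σ) * σ, hw'σσ⟩ : H) = (⟨σ * σ, hσσ⟩ : H) := by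
      ext; simp
    rw [heq] at this
    rw [← hS] at this
    exact this
  have h'' : α * S * α⁻¹ = tiu S := by
    have hx : ∀ T : (Matrix (Fin n) (Fin n) ℂ)ˣ, S = α⁻¹ * T * α → α * S * α⁻¹ = T := by
      intro T hT
      rw [hT]; group
    exact hx (tiu S) e4
  have e5 : tiu (S⁻¹) * α * S = α := by
    rw [MonoidHom.map_inv, ← h'']; group
  have e6 : ((S : Matrix (Fin n) (Fin n) ℂ))ᵀ * (α : Matrix (Fin n) (Fin n) ℂ) *
      (S : Matrix (Fin n) (Fin n) ℂ) = (α : Matrix (Fin n) (Fin n) ℂ) := by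
    have h7 := congrArg (Units.val) e5
    rw [Units.val_mul, Units.val_mul, tiu_val, inv_inv] at h7
    exact h7
  -- c * c = 1
  have hBtransB : Bᵀ * (α : Matrix (Fin n) (Fin n) ℂ) * B = (α : Matrix (Fin n) (Fin n) ℂ) := by
    rw [hB, Matrix.transpose_mul, Matrix.transpose_transpose]
    simp only [Matrix.mul_assoc, Units.inv_mul_cancel_left]
    rw [← Matrix.mul_assoc, ← Matrix.transpose_mul, ← Units.val_mul, inv_mul_cancel,
      Units.val_one, Matrix.transpose_one, one_mul]
  have hcc : (c * c) • (α : Matrix (Fin n) (Fin n) ℂ) = (α : Matrix (Fin n) (Fin n) ℂ) := by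
    have := e6
    rw [hSval, hγval] at this
    rw [Matrix.transpose_smul, smul_mul_assoc, smul_mul_assoc, mul_smul_comm, smul_smul,
      hBtransB] at this
    rwa [mul_comm] at this
  have hαne : (α : Matrix (Fin n) (Fin n) ℂ) ≠ 0 := by
    intro h0
    have h1 := α.mul_inv
    rw [h0, zero_mul] at h1
    exact one_ne_zero h1.symm
  have hcc1 : c * c = 1 := by
    have h1 : (c * c - 1) • (α : Matrix (Fin n) (Fin n) ℂ) = 0 := by
      rw [sub_smul, one_smul, hcc, sub_self]
    rcases smul_eq_zero.1 h1 with h | h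
    · exact sub_eq_zero.1 h
    · exact absurd h hαne
  refine ⟨c, mul_self_eq_one_iff.1 hcc1, ?_⟩
  intro h2
  have : (⟨σ * σ, h2⟩ : H) = ⟨σ * σ, hσσ⟩ := rfl
  rw [this, ← hS, hSval, hγval, hB, Matrix.coe_units_inv, Matrix.transpose_nonsing_inv]
end
end

section
/- Let W be a group, H a subgroup of index 2, and ρ : H → GL(n,ℂ) an irreducible representation. Suppose for some σ ∈ W \ H there exist α ∈ GL(n,ℂ) and λ ∈ {1,-1} with ρ(σ⁻¹ w σ) = α⁻¹ (ρ(w)ᵀ)⁻¹ α for all w ∈ H and ρ(σ²) = λ (αᵀ)⁻¹ α. Then for every σ' ∈ W \ H there exists α' ∈ GL(n,ℂ) such that the same two identities hold with σ', α' and the SAME sign λ. In particular the sign λ depends only on ρ, not on the choice of σ or α. -/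
open Matrix

noncomputable section

/-- If the sign `λ` works for one choice of `σ ∈ W \ H` (with intertwiner `α`), then for
every `σ' ∈ W \ H` there is an intertwiner `α'` satisfying the same two identities with
the SAME sign `λ`: the sign depends only on the irreducible representation `ρ`. -/
theorem stmt5 (n : ℕ) (hn : 0 < n) (W : Type*) [Group W] (H : Subgroup W)
    (hH : H.index = 2) (σ : W) (hσ : σ ∉ H)
    (ρ : H →* (Matrix (Fin n) (Fin n) ℂ)ˣ)
    (hirr : ∀ p : Submodule ℂ (Fin n → ℂ),
      (∀ (h : H) (v : Fin n → ℂ), v ∈ p →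
        ((ρ h : (Matrix (Fin n) (Fin n) ℂ)ˣ) : Matrix (Fin n) (Fin n) ℂ).mulVec v ∈ p) →
      p = ⊥ ∨ p = ⊤)
    (α : (Matrix (Fin n) (Fin n) ℂ)ˣ) (lam : ℂ) (hlam : lam = 1 ∨ lam = -1)
    (hα : ∀ (w : W) (hw : w ∈ H) (hw' : σ⁻¹ * w * σ ∈ H),
      ((ρ ⟨σ⁻¹ * w * σ, hw'⟩ : (Matrix (Fin n) (Fin n) ℂ)ˣ) : Matrix (Fin n) (Fin n) ℂ) =
        ((α : Matrix (Fin n) (Fin n) ℂ))⁻¹ *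
          (((ρ ⟨w, hw⟩ : (Matrix (Fin n) (Fin n) ℂ)ˣ) : Matrix (Fin n) (Fin n) ℂ)ᵀ)⁻¹ *
          (α : Matrix (Fin n) (Fin n) ℂ))
    (hsq : ∀ h2 : σ * σ ∈ H,
      ((ρ ⟨σ * σ, h2⟩ : (Matrix (Fin n) (Fin n) ℂ)ˣ) : Matrix (Fin n) (Fin n) ℂ) =
        lam • ((((α : Matrix (Fin n) (Fin n) ℂ))ᵀ)⁻¹ * (α : Matrix (Fin n) (Fin n) ℂ))) :
    ∀ σ' : W, σ' ∉ H →
      ∃ α' : (Matrix (Fin n) (Fin n) ℂ)ˣ,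
        (∀ (w : W) (hw : w ∈ H) (hw' : σ'⁻¹ * w * σ' ∈ H),
          ((ρ ⟨σ'⁻¹ * w * σ', hw'⟩ : (Matrix (Fin n) (Fin n) ℂ)ˣ) : Matrix (Fin n) (Fin n) ℂ) =
            ((α' : Matrix (Fin n) (Fin n) ℂ))⁻¹ *
              (((ρ ⟨w, hw⟩ : (Matrix (Fin n) (Fin n) ℂ)ˣ) : Matrix (Fin n) (Fin n) ℂ)ᵀ)⁻¹ *
              (α' : Matrix (Fin n) (Fin n) ℂ)) ∧
        (∀ h2 : σ' * σ' ∈ H,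
          ((ρ ⟨σ' * σ', h2⟩ : (Matrix (Fin n) (Fin n) ℂ)ˣ) : Matrix (Fin n) (Fin n) ℂ) =
            lam • ((((α' : Matrix (Fin n) (Fin n) ℂ))ᵀ)⁻¹ *
              (α' : Matrix (Fin n) (Fin n) ℂ))) := by
  intro σ' hσ'
  set M := Matrix (Fin n) (Fin n) ℂ
  have hh : σ⁻¹ * σ' ∈ H := by
    rw [Subgroup.mul_mem_iff_of_index_two hH]
    simp [hσ, hσ', H.inv_mem_iff]
  set h : H := ⟨σ⁻¹ * σ', hh⟩ with h_def
  refine ⟨α * ρ h, ?_, ?_⟩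
  · intro w hw hw'
    have hw2 : σ⁻¹ * w * σ ∈ H := by
      rw [Subgroup.mul_mem_iff_of_index_two hH]
      have : σ⁻¹ * w ∉ H := by
        rw [Subgroup.mul_mem_iff_of_index_two hH]
        simp [hσ, hw, H.inv_mem_iff]
      simp [hσ, this]
    have key : (⟨σ'⁻¹ * w * σ', hw'⟩ : H) = h⁻¹ * ⟨σ⁻¹ * w * σ, hw2⟩ * h := by
      ext
      simp only [h_def, Subgroup.coe_mul, Subgroup.coe_inv]
      group
    rw [key, _root_.map_mul, _root_.map_mul, Units.val_mul, Units.val_mul, hα w hw hw2]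
    have e1 : ((↑(α * ρ h) : M))⁻¹ = (↑(ρ h) : M)⁻¹ * (↑α : M)⁻¹ :=
      Matrix.mul_inv_rev _ _
    rw [Units.val_mul] at e1
    rw [Units.val_mul, e1]
    rw [show ((↑(ρ h⁻¹) : M)) = (↑(ρ h) : M)⁻¹ by
      rw [map_inv, ← Matrix.coe_units_inv]]
    noncomm_ring
  · intro h2
    have hσσ : σ * σ ∈ H := Subgroup.mul_self_mem_of_index_two hH σ
    have hc : σ⁻¹ * (↑h : W) * σ ∈ H := by
      rw [Subgroup.mul_mem_iff_of_index_two hH]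
      have : σ⁻¹ * (↑h : W) ∉ H := by
        rw [Subgroup.mul_mem_iff_of_index_two hH]
        simp [hσ, h.2, H.inv_mem_iff]
      simp [hσ, this]
    have key : (⟨σ' * σ', h2⟩ : H) = ⟨σ * σ, hσσ⟩ * ⟨σ⁻¹ * (↑h : W) * σ, hc⟩ * h := by
      ext
      simp only [h_def, Subgroup.coe_mul]
      group
    rw [key, _root_.map_mul, _root_.map_mul, Units.val_mul, Units.val_mul, hsq hσσ,
      hα (↑h : W) h.2 hc]
    have e1 : (((↑(α * ρ h) : M))ᵀ)⁻¹ = ((↑α : M)ᵀ)⁻¹ * ((↑(ρ h) : M)ᵀ)⁻¹ := by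
      rw [Units.val_mul, Matrix.transpose_mul, Matrix.mul_inv_rev]
    rw [e1, Units.val_mul]
    have hραh : (↑(ρ ⟨↑h, h.2⟩) : M) = (↑(ρ h) : M) := by congr
    rw [hραh]
    have cancel : (↑α : M) * (↑α : M)⁻¹ = 1 := by
      rw [← Matrix.coe_units_inv, ← Units.val_mul, mul_inv_cancel, Units.val_one]
    rw [smul_mul_assoc, smul_mul_assoc]
    congr 1
    calc (↑α : M)ᵀ⁻¹ * ↑α * ((↑α : M)⁻¹ * ((↑(ρ h) : M)ᵀ)⁻¹ * ↑α) * ↑(ρ h)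
        = (↑α : M)ᵀ⁻¹ * ((↑α : M) * (↑α : M)⁻¹) * ((↑(ρ h) : M)ᵀ)⁻¹ * ((↑α : M) * ↑(ρ h)) := by
          noncomm_ring
      _ = (↑α : M)ᵀ⁻¹ * ((↑(ρ h) : M)ᵀ)⁻¹ * ((↑α : M) * ↑(ρ h)) := by rw [cancel]; noncomm_ring
end
end

section
/- Let W be a group, H an index-2 subgroup, σ ∈ W \ H, and ρ : H → GL(n,ℂ) a homomorphism. Suppose α ∈ GL(n,ℂ) and λ ∈ {1,-1} satisfy ρ(σ⁻¹wσ) = α⁻¹(ρ(w)ᵀ)⁻¹α for all w ∈ H and ρ(σ²) = λ(αᵀ)⁻¹α. Let Ψ : W → (GL(n,ℂ)×GL(n,ℂ)) ⋊ ℤ/2ℤ be the associated parameter (Ψ(w) = (ρ(w), α⁻¹(ρ(w)ᵀ)⁻¹α) for w ∈ H, Ψ(σ) = σ₀·(1, ρ(σ²))). Then the vector (αᵀ)⁻¹ ∈ End(ℂⁿ) is fixed by Asai_λ ∘ Ψ, i.e. Asai_λ(Ψ(x))((αᵀ)⁻¹) = (αᵀ)⁻¹ for all x ∈ W. -/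
open Matrix

noncomputable section

/-- The swap automorphism of `G × G`. -/
def swapAut (G : Type*) [Group G] : MulAut (G × G) := MulEquiv.prodComm

/-- The homomorphism `ℤ/2ℤ → Aut(G × G)` sending the nontrivial element to the swap. -/
def swapHom (G : Type*) [Group G] : Multiplicative (ZMod 2) →* MulAut (G × G) :=
  AddMonoidHom.toMultiplicativeLeft
    (ZMod.lift 2 ⟨zmultiplesHom (Additive (MulAut (G × G))) (Additive.ofMul (swapAut G)), by
      have h : swapAut G * swapAut G = 1 := by ext x <;> simp [swapAut, MulAut.mul_apply]
      show ((2 : ℕ) : ℤ) • Additive.ofMul (swapAut G) = 0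
      rw [Nat.cast_ofNat, two_zsmul, ← ofMul_mul, h, ofMul_one]⟩)

/-- The semidirect product `(G × G) ⋊ ℤ/2ℤ` where the nontrivial element swaps the factors. -/
abbrev SemiG (G : Type*) [Group G] :=
  SemidirectProduct (G × G) (Multiplicative (ZMod 2)) (swapHom G)

/-- The nontrivial element `σ₀` of `ℤ/2ℤ`, inside the semidirect product. -/
def sigma0 (G : Type*) [Group G] : SemiG G :=
  SemidirectProduct.inr (Multiplicative.ofAdd (1 : ZMod 2))

/-- Given the parameter `Ψ : W → (GL(n,ℂ) × GL(n,ℂ)) ⋊ ℤ/2ℤ` associated to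
`ρ : H → GL(n,ℂ)`, `α` and the sign `λ` (with `ρ(σ⁻¹wσ) = α⁻¹ (ρ(w)ᵀ)⁻¹ α` and
`ρ(σ²) = λ (αᵀ)⁻¹ α`), the vector `(αᵀ)⁻¹ ∈ End(ℂⁿ)` is fixed by `Asai_λ ∘ Ψ`. -/
theorem stmt13 (n : ℕ) (W : Type*) [Group W] (H : Subgroup W)
    (hH : H.index = 2) (σ : W) (hσ : σ ∉ H)
    (ρ : H →* (Matrix (Fin n) (Fin n) ℂ)ˣ)
    (α : (Matrix (Fin n) (Fin n) ℂ)ˣ) (lam : ℂ) (hlam : lam = 1 ∨ lam = -1)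
    (hconj : ∀ (w : W) (hw : w ∈ H) (hw' : σ⁻¹ * w * σ ∈ H),
      ((ρ ⟨σ⁻¹ * w * σ, hw'⟩ : (Matrix (Fin n) (Fin n) ℂ)ˣ) : Matrix (Fin n) (Fin n) ℂ) =
        ((α : Matrix (Fin n) (Fin n) ℂ))⁻¹ *
          (((ρ ⟨w, hw⟩ : (Matrix (Fin n) (Fin n) ℂ)ˣ) : Matrix (Fin n) (Fin n) ℂ)ᵀ)⁻¹ *
          (α : Matrix (Fin n) (Fin n) ℂ))
    (hsq : ∀ h2 : σ * σ ∈ H,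
      ((ρ ⟨σ * σ, h2⟩ : (Matrix (Fin n) (Fin n) ℂ)ˣ) : Matrix (Fin n) (Fin n) ℂ) =
        lam • ((((α : Matrix (Fin n) (Fin n) ℂ))ᵀ)⁻¹ * (α : Matrix (Fin n) (Fin n) ℂ)))
    (Ψ : W →* SemiG ((Matrix (Fin n) (Fin n) ℂ)ˣ))
    (hΨH : ∀ (w : W) (hw : w ∈ H) (hw' : σ⁻¹ * w * σ ∈ H),
      Ψ w = SemidirectProduct.inl (ρ ⟨w, hw⟩, ρ ⟨σ⁻¹ * w * σ, hw'⟩))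
    (hΨσ : ∀ h2 : σ * σ ∈ H,
      Ψ σ = sigma0 _ * SemidirectProduct.inl (1, ρ ⟨σ * σ, h2⟩))
    (A : SemiG ((Matrix (Fin n) (Fin n) ℂ)ˣ) →* (Module.End ℂ (Matrix (Fin n) (Fin n) ℂ))ˣ)
    (hA1 : ∀ (g g' : (Matrix (Fin n) (Fin n) ℂ)ˣ) (X : Matrix (Fin n) (Fin n) ℂ),
      ((A (SemidirectProduct.inl (g, g')) : (Module.End ℂ (Matrix (Fin n) (Fin n) ℂ))ˣ) :
          Module.End ℂ (Matrix (Fin n) (Fin n) ℂ)) X =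
        (g : Matrix (Fin n) (Fin n) ℂ) * X * ((g' : Matrix (Fin n) (Fin n) ℂ))ᵀ)
    (hA2 : ∀ X : Matrix (Fin n) (Fin n) ℂ,
      ((A (sigma0 _) : (Module.End ℂ (Matrix (Fin n) (Fin n) ℂ))ˣ) :
          Module.End ℂ (Matrix (Fin n) (Fin n) ℂ)) X = lam • Xᵀ) :
    ∀ x : W,
      ((A (Ψ x) : (Module.End ℂ (Matrix (Fin n) (Fin n) ℂ))ˣ) :
          Module.End ℂ (Matrix (Fin n) (Fin n) ℂ))
        ((((α : Matrix (Fin n) (Fin n) ℂ))ᵀ)⁻¹) =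
      (((α : Matrix (Fin n) (Fin n) ℂ))ᵀ)⁻¹ := by
  -- setup
  set M : Matrix (Fin n) (Fin n) ℂ := (α : Matrix (Fin n) (Fin n) ℂ) with hM
  have hMd : IsUnit M.det := (Matrix.isUnit_iff_isUnit_det M).mp α.isUnit
  have hMdT : IsUnit Mᵀ.det := by rwa [Matrix.det_transpose]
  have hlam2 : lam * lam = 1 := by rcases hlam with h | h <;> simp [h]
  -- membership facts
  have hσinv : σ⁻¹ ∉ H := fun h => hσ ((inv_mem_iff).mp h)
  have hHmem : ∀ w ∈ H, σ⁻¹ * w * σ ∈ H := by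
    intro w hw
    rw [Subgroup.mul_mem_iff_of_index_two hH]
    have h1 : σ⁻¹ * w ∉ H := by
      rw [Subgroup.mul_mem_iff_of_index_two hH]
      simp [hσinv, hw]
    simp [h1, hσ]
  have hσ2 : σ * σ ∈ H := Subgroup.mul_self_mem_of_index_two hH σ
  -- case w ∈ H
  have caseH : ∀ w ∈ H,
      ((A (Ψ w) : (Module.End ℂ (Matrix (Fin n) (Fin n) ℂ))ˣ) :
          Module.End ℂ (Matrix (Fin n) (Fin n) ℂ)) (Mᵀ⁻¹) = Mᵀ⁻¹ := by
    intro w hw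
    have hw' := hHmem w hw
    rw [hΨH w hw hw', hA1, hconj w hw hw']
    set N : Matrix (Fin n) (Fin n) ℂ := ((ρ ⟨w, hw⟩ : (Matrix (Fin n) (Fin n) ℂ)ˣ) :
      Matrix (Fin n) (Fin n) ℂ) with hN
    have hNd : IsUnit N.det := (Matrix.isUnit_iff_isUnit_det N).mp (ρ ⟨w, hw⟩).isUnit
    have hNdT : IsUnit Nᵀ.det := by rwa [Matrix.det_transpose]
    rw [Matrix.transpose_mul, Matrix.transpose_mul, Matrix.transpose_nonsing_inv,
      Matrix.transpose_transpose, Matrix.transpose_nonsing_inv]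
    simp only [← mul_assoc]
    rw [mul_assoc N, Matrix.nonsing_inv_mul _ hMdT, mul_one,
      Matrix.mul_nonsing_inv _ hNd, one_mul]
  -- case σ
  have caseσ :
      ((A (Ψ σ) : (Module.End ℂ (Matrix (Fin n) (Fin n) ℂ))ˣ) :
          Module.End ℂ (Matrix (Fin n) (Fin n) ℂ)) (Mᵀ⁻¹) = Mᵀ⁻¹ := by
    rw [hΨσ hσ2, _root_.map_mul, Units.val_mul, Module.End.mul_apply, hA1, hA2, hsq hσ2]
    rw [Units.val_one, one_mul]
    simp only [Matrix.transpose_smul, Matrix.transpose_mul, Matrix.transpose_transpose,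
      Matrix.transpose_nonsing_inv, Matrix.smul_mul, Matrix.mul_smul, smul_smul, hlam2,
      one_smul, ← mul_assoc]
    rw [mul_assoc _ M, Matrix.mul_nonsing_inv _ hMd, mul_one]
  -- general case
  intro x
  by_cases hx : x ∈ H
  · exact caseH x hx
  · have hmem : σ⁻¹ * x ∈ H := by
      rw [Subgroup.mul_mem_iff_of_index_two hH]
      simp [hσinv, hx]
    have hxeq : x = σ * (σ⁻¹ * x) := by group
    rw [hxeq, _root_.map_mul, _root_.map_mul, Units.val_mul, Module.End.mul_apply,
      caseH _ hmem, caseσ]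
end
end
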